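/- Let d ≥ p ≥ 2, k > p, s ≥ k·d + 1, and let a⃗ = (a_1,…,a_p) be a sequence of positive integers with a_1+⋯+a_p = k. Let H ⊆ binom([n],k) be a hypergraph that contains no (a⃗,d)-Δ-system as a subfamily, and let H* be an s-homogeneous subgraph of H with intersection pattern J. Suppose r(J) = k−1 and J contains exactly k−1 sets of size k−1. Let E ∈ H* and let v ∈ E be the vertex contained in all (k−1)-element sets of I(E,H*). Then v ∈ F for every F ∈ H with |F ∩ E| ≥ k − a_1. -/

import Mathlib

open Finset

/-- A Δ-system (sunflower) with center `C`: a family of at least two sets such that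
the intersection of any two distinct members equals `C`. -/
def IsDeltaSystem (D : Finset (Finset ℕ)) (C : Finset ℕ) : Prop :=
  2 ≤ D.card ∧ ∀ A ∈ D, ∀ B ∈ D, A ≠ B → A ∩ B = C

/-- `A : Fin p → Finset ℕ` is an `a⃗`-partition of the set `E`. -/
def IsAPartition (p : ℕ) (a : Fin p → ℕ) (A : Fin p → Finset ℕ) (E : Finset ℕ) : Prop :=
  (∀ i, (A i).card = a i) ∧ (∀ i j, i ≠ j → Disjoint (A i) (A j)) ∧
    Finset.univ.sup A = E

/-- A semi-`(a⃗,b⃗)`-Δ-system with host `E0` and petals `E i j` (`i ∈ [p]`, `j ∈ [b i]`):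
for some `a⃗`-partition `E0 = A 1 ∪ ⋯ ∪ A p`, for each `i` the family
`{E0, E i 1, …, E i (b i)}` is a Δ-system with center `E0 \ A i`. -/
def IsSemiSystem (p : ℕ) (a b : Fin p → ℕ) (E0 : Finset ℕ)
    (E : (i : Fin p) → Fin (b i) → Finset ℕ) : Prop :=
  ∃ A : Fin p → Finset ℕ, IsAPartition p a A E0 ∧
    ∀ i : Fin p,
      (∀ j, E i j ≠ E0) ∧ Function.Injective (E i) ∧
      (∀ j, E0 ∩ E i j = E0 \ A i) ∧
      (∀ j j', j ≠ j' → E i j ∩ E i j' = E0 \ A i)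

/-- An `(a⃗,b⃗)`-Δ-system: a semi-`(a⃗,b⃗)`-Δ-system in which the sets `E i j \ E0`
are pairwise disjoint. -/
def IsABSystem (p : ℕ) (a b : Fin p → ℕ) (E0 : Finset ℕ)
    (E : (i : Fin p) → Fin (b i) → Finset ℕ) : Prop :=
  IsSemiSystem p a b E0 E ∧
    ∀ x y : (i : Fin p) × Fin (b i), x ≠ y →
      Disjoint (E x.1 x.2 \ E0) (E y.1 y.2 \ E0)

/-- The family described by the predicate `Fam` contains an `(a⃗,d)`-Δ-system, i.e. an
`(a⃗,b⃗)`-Δ-system with `b` a sequence of positive integers summing to `d`, all of whose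
members belong to `Fam`. -/
def FamContainsADSystem (p : ℕ) (a : Fin p → ℕ) (d : ℕ) (Fam : Finset ℕ → Prop) : Prop :=
  ∃ b : Fin p → ℕ, (∀ i, 0 < b i) ∧ (∑ i, b i) = d ∧
    ∃ E0, Fam E0 ∧ ∃ E : (i : Fin p) → Fin (b i) → Finset ℕ,
      (∀ i j, Fam (E i j)) ∧ IsABSystem p a b E0 E

/-- The finite family `H` contains an `(a⃗,d)`-Δ-system as a subfamily. -/
def ContainsADSystem (p : ℕ) (a : Fin p → ℕ) (d : ℕ) (H : Finset (Finset ℕ)) : Prop :=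
  FamContainsADSystem p a d (· ∈ H)

/-- A family is `d`-wise-intersecting if every `d` of its members have a common element. -/
def WiseIntersecting (d : ℕ) (F : Finset (Finset ℕ)) : Prop :=
  ∀ f : Fin d → Finset ℕ, (∀ i, f i ∈ F) → ∃ v, ∀ i, v ∈ f i

/-- Non-trivial `d`-wise-intersecting: `d`-wise-intersecting, but no element lies in
all members. -/
def NonTrivialWiseIntersecting (d : ℕ) (F : Finset (Finset ℕ)) : Prop :=
  WiseIntersecting d F ∧ ¬ ∃ v, ∀ A ∈ F, v ∈ A

/-- A family is intersecting if every two members have a nonempty intersection. -/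
def IntersectingFam (F : Finset (Finset ℕ)) : Prop :=
  ∀ A ∈ F, ∀ B ∈ F, (A ∩ B).Nonempty

/-- Non-trivial intersecting: intersecting, but no element lies in all members. -/
def NonTrivialIntersectingFam (F : Finset (Finset ℕ)) : Prop :=
  IntersectingFam F ∧ ¬ ∃ v, ∀ A ∈ F, v ∈ A

/-- The intersection structure `I(E,H) = {E ∩ E' : E' ∈ H \ {E}}`. -/
def interStruct (H : Finset (Finset ℕ)) (E : Finset ℕ) : Finset (Finset ℕ) :=
  (H.erase E).image (fun E' => E ∩ E')

/-- The projection `Π(S) = {i : S ∩ V i ≠ ∅}` with respect to the parts `V`. -/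
def proj {k : ℕ} (V : Fin k → Finset ℕ) (S : Finset ℕ) : Finset (Fin k) :=
  Finset.univ.filter (fun i => (S ∩ V i).Nonempty)

/-- `H ⊆ binom([n],k)` is `s`-homogeneous with intersection pattern
`J ⊆ 2^[k] ∖ {[k]}`: `H` is `k`-partite (with parts partitioning `[n] = Icc 1 n`),
`Π(I(E,H)) = J` for all `E ∈ H`, `J` is closed under intersection, and every set of
`I(E,H)` is the center of a Δ-system of size `s` formed by edges of `H` containing `E`. -/
def IsHomogeneousWith (n k s : ℕ) (H : Finset (Finset ℕ)) (J : Finset (Finset (Fin k))) :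
    Prop :=
  ∃ V : Fin k → Finset ℕ,
    (∀ i j, i ≠ j → Disjoint (V i) (V j)) ∧
    Finset.univ.sup V = Finset.Icc 1 n ∧
    (∀ E ∈ H, ∀ i, (E ∩ V i).card = 1) ∧
    (Finset.univ : Finset (Fin k)) ∉ J ∧
    (∀ E ∈ H, (interStruct H E).image (proj V) = J) ∧
    (∀ A ∈ J, ∀ B ∈ J, A ∩ B ∈ J) ∧
    (∀ E ∈ H, ∀ C ∈ interStruct H E,
      ∃ D : Finset (Finset ℕ), D ⊆ H ∧ E ∈ D ∧ D.card = s ∧ IsDeltaSystem D C)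

/-- The rank `r(J) = min{|A| : A ⊆ [k], A ∉ J, no B ∈ J contains A}`. -/
noncomputable def patternRank {k : ℕ} (J : Finset (Finset (Fin k))) : ℕ :=
  sInf {m : ℕ | ∃ A : Finset (Fin k), A ∉ J ∧ (∀ B ∈ J, ¬ A ⊆ B) ∧ A.card = m}

/-- The `i`-th shadow of a `k`-uniform family: all `(k-i)`-subsets of its edges. -/
def iShadow (k i : ℕ) (H : Finset (Finset ℕ)) : Finset (Finset ℕ) :=
  H.biUnion (fun E => Finset.powersetCard (k - i) E)

/-- `deg_H(E')`: the number of edges of `H` containing `E'`. -/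
def degSet (H : Finset (Finset ℕ)) (E' : Finset ℕ) : ℕ :=
  (H.filter (fun F => E' ⊆ F)).card

/-- The weight `ω_H(E) = Σ_{E' ⊆ E, |E'| = k-1} 1 / deg_H(E')`. -/
noncomputable def weight (k : ℕ) (H : Finset (Finset ℕ)) (E : Finset ℕ) : ℝ :=
  ∑ E' ∈ Finset.powersetCard (k - 1) E, (1 : ℝ) / (degSet H E' : ℝ)

/-- `deg_H(uv)` for a 3-graph: the number of edges containing both `u` and `v`. -/
def deg2 (H : Finset (Finset ℕ)) (u v : ℕ) : ℕ :=
  (H.filter (fun A => u ∈ A ∧ v ∈ A)).card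

lemma exists_partition {ι : Type*} [DecidableEq ι] (f : ι → ℕ) (s : Finset ι) :
    ∀ X : Finset ℕ, X.card = ∑ i ∈ s, f i →
    ∃ A : ι → Finset ℕ, (∀ i ∈ s, (A i).card = f i) ∧ (∀ i ∈ s, A i ⊆ X) ∧
      (∀ i ∈ s, ∀ j ∈ s, i ≠ j → Disjoint (A i) (A j)) ∧ s.sup A = X := by
  induction s using Finset.induction_on with
  | empty =>
    intro X hX
    refine ⟨fun _ => ∅, by simp, by simp, by simp, ?_⟩
    simp only [Finset.sup_empty]
    symm
    exact Finset.card_eq_zero.mp (by simpa using hX)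
  | @insert i s hi ih =>
    intro X hX
    rw [Finset.sum_insert hi] at hX
    obtain ⟨Y, hYX, hY⟩ := Finset.exists_subset_card_eq (s := X) (n := f i) (by omega)
    obtain ⟨A, h1, h2, h3, h4⟩ := ih (X \ Y) (by rw [Finset.card_sdiff_of_subset hYX, hX, hY]; omega)
    refine ⟨fun j => if j = i then Y else A j, ?_, ?_, ?_, ?_⟩
    · intro j hj
      beta_reduce
      rcases Finset.mem_insert.mp hj with rfl | hjs
      · simp [hY]
      · rw [if_neg (by rintro rfl; exact hi hjs)]; exact h1 j hjs
    · intro j hj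
      beta_reduce
      rcases Finset.mem_insert.mp hj with rfl | hjs
      · simp [hYX]
      · rw [if_neg (by rintro rfl; exact hi hjs)]
        exact (h2 j hjs).trans (Finset.sdiff_subset)
    · intro j hj j' hj' hne
      beta_reduce
      rcases Finset.mem_insert.mp hj with rfl | hjs <;>
        rcases Finset.mem_insert.mp hj' with rfl | hjs'
      · exact absurd rfl hne
      · rw [if_pos rfl, if_neg (by rintro rfl; exact hi hjs')]
        exact Finset.disjoint_sdiff.mono_right (h2 j' hjs')
      · rw [if_pos rfl, if_neg (by rintro rfl; exact hi hjs)]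
        exact ((Finset.disjoint_sdiff.mono_right (h2 j hjs))).symm
      · rw [if_neg (by rintro rfl; exact hi hjs), if_neg (by rintro rfl; exact hi hjs')]
        exact h3 j hjs j' hjs' hne
    · rw [Finset.sup_insert, if_pos rfl]
      have : s.sup (fun j => if j = i then Y else A j) = s.sup A := by
        apply Finset.sup_congr rfl
        intro j hj
        rw [if_neg (by rintro rfl; exact hi hj)]
      rw [this, h4]
      exact Finset.union_sdiff_of_subset hYX

lemma delta_select (D : Finset (Finset ℕ)) (C E0 : Finset ℕ) (hd : IsDeltaSystem D C)
    (hE0 : E0 ∈ D) (hC : C ⊆ E0) (W : Finset ℕ) (m : ℕ)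
    (hm : W.card + m + 1 ≤ D.card) :
    ∃ P, P ⊆ D.erase E0 ∧ P.card = m ∧ ∀ X ∈ P, Disjoint (X \ E0) W := by
  classical
  set Bad := (D.erase E0).filter (fun X => ¬ Disjoint (X \ E0) W) with hBadDef
  have hBad : Bad.card ≤ W.card := by
    have hsub : Bad ⊆ W.biUnion (fun w => (D.erase E0).filter (fun X => w ∈ X \ E0)) := by
      intro X hX
      have h2 := (Finset.mem_filter.mp hX).2
      rw [Finset.not_disjoint_iff] at h2
      obtain ⟨w, hw1, hw2⟩ := h2
      exact Finset.mem_biUnion.mpr ⟨w, hw2, Finset.mem_filter.mpr ⟨(Finset.mem_filter.mp hX).1, hw1⟩⟩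
    calc Bad.card ≤ (W.biUnion (fun w => (D.erase E0).filter (fun X => w ∈ X \ E0))).card :=
          Finset.card_le_card hsub
      _ ≤ ∑ w ∈ W, ((D.erase E0).filter (fun X => w ∈ X \ E0)).card := Finset.card_biUnion_le
      _ ≤ ∑ _w ∈ W, 1 := by
          apply Finset.sum_le_sum
          intro w _
          apply Finset.card_le_one.mpr
          intro X hX Y hY
          by_contra hne
          have hX' := Finset.mem_filter.mp hX
          have hY' := Finset.mem_filter.mp hY
          have hXY := hd.2 X (Finset.mem_of_mem_erase hX'.1) Y (Finset.mem_of_mem_erase hY'.1) hne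
          have : w ∈ C := hXY ▸ Finset.mem_inter.mpr
            ⟨(Finset.mem_sdiff.mp hX'.2).1, (Finset.mem_sdiff.mp hY'.2).1⟩
          exact (Finset.mem_sdiff.mp hX'.2).2 (hC this)
      _ = W.card := by simp
  set Good := (D.erase E0).filter (fun X => Disjoint (X \ E0) W) with hGoodDef
  have hcards : Good.card + Bad.card = D.card - 1 := by
    rw [hGoodDef, hBadDef, Finset.card_filter_add_card_filter_not,
      Finset.card_erase_of_mem hE0]
  have hmG : m ≤ Good.card := by omega
  obtain ⟨P, hP1, hP2⟩ := Finset.exists_subset_card_eq (s := Good) (n := m) hmG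
  exact ⟨P, hP1.trans (Finset.filter_subset _ _), hP2,
    fun X hX => (Finset.mem_filter.mp (hP1 hX)).2⟩

lemma mem_proj_of {k : ℕ} (V : Fin k → Finset ℕ) (X C : Finset ℕ) (hC : C ⊆ X) (i : Fin k)
    (hX1 : (X ∩ V i).card = 1) (u : ℕ) (hu : u ∈ X) (hui : u ∈ V i) :
    i ∈ proj V C ↔ u ∈ C := by
  simp only [proj, Finset.mem_filter, Finset.mem_univ, true_and]
  constructor
  · rintro ⟨w, hw⟩
    rw [Finset.mem_inter] at hw
    have hw' : w ∈ X ∩ V i := Finset.mem_inter.mpr ⟨hC hw.1, hw.2⟩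
    have hu' : u ∈ X ∩ V i := Finset.mem_inter.mpr ⟨hu, hui⟩
    have heq : w = u := Finset.card_le_one.mp (le_of_eq hX1) _ hw' _ hu'
    exact heq ▸ hw.1
  · intro h
    exact ⟨u, Finset.mem_inter.mpr ⟨h, hui⟩⟩

lemma proj_card {k : ℕ} (V : Fin k → Finset ℕ)
    (hVd : ∀ i j, i ≠ j → Disjoint (V i) (V j)) (X : Finset ℕ)
    (hX1 : ∀ i, (X ∩ V i).card = 1) (hXc : ∀ u ∈ X, ∃ i, u ∈ V i) :
    ∀ C : Finset ℕ, C ⊆ X → (proj V C).card = C.card := by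
  intro C
  induction C using Finset.induction_on with
  | empty => intro _; simp [proj]
  | @insert u C hu ih =>
    intro hsub
    have huX : u ∈ X := hsub (Finset.mem_insert_self u C)
    obtain ⟨i, hi⟩ := hXc u huX
    have hCX : C ⊆ X := (Finset.subset_insert u C).trans hsub
    have hnot : i ∉ proj V C := by
      rw [mem_proj_of V X C hCX i (hX1 i) u huX hi]
      exact hu
    have hkey : proj V (insert u C) = insert i (proj V C) := by
      ext j
      simp only [proj, Finset.mem_filter, Finset.mem_univ, true_and, Finset.mem_insert]
      constructor
      · rintro ⟨w, hw⟩
        rw [Finset.mem_inter, Finset.mem_insert] at hw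
        rcases hw.1 with rfl | hwC
        · left
          by_contra hne
          exact (hVd i j (fun h => hne h.symm)).forall_ne_finset hi hw.2 rfl
        · right; exact ⟨w, Finset.mem_inter.mpr ⟨hwC, hw.2⟩⟩
      · rintro (rfl | ⟨w, hw⟩)
        · exact ⟨u, Finset.mem_inter.mpr ⟨Finset.mem_insert_self u C, hi⟩⟩
        · rw [Finset.mem_inter] at hw
          exact ⟨w, Finset.mem_inter.mpr ⟨Finset.mem_insert_of_mem hw.1, hw.2⟩⟩
    rw [hkey, Finset.card_insert_of_notMem hnot, Finset.card_insert_of_notMem hu, ih hCX]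

lemma proj_inj {k : ℕ} (V : Fin k → Finset ℕ) (X : Finset ℕ)
    (hX1 : ∀ i, (X ∩ V i).card = 1) (hXc : ∀ u ∈ X, ∃ i, u ∈ V i)
    (C C' : Finset ℕ) (hC : C ⊆ X) (hC' : C' ⊆ X) (h : proj V C = proj V C') : C = C' := by
  have key : ∀ D D' : Finset ℕ, D ⊆ X → D' ⊆ X → proj V D = proj V D' → D ⊆ D' := by
    intro D D' hD hD' hDD' u hu
    obtain ⟨i, hi⟩ := hXc u (hD hu)
    have h1 := mem_proj_of V X D hD i (hX1 i) u (hD hu) hi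
    have h2 := mem_proj_of V X D' hD' i (hX1 i) u (hD hu) hi
    exact h2.mp (hDD' ▸ h1.mpr hu)
  exact Finset.Subset.antisymm (key C C' hC hC' h) (key C' C hC' hC h.symm)

lemma proj_sdiff {k : ℕ} (V : Fin k → Finset ℕ) (X S : Finset ℕ) (hS : S ⊆ X)
    (hX1 : ∀ i, (X ∩ V i).card = 1) :
    proj V (X \ S) = Finset.univ \ proj V S := by
  ext i
  obtain ⟨u, hu⟩ := Finset.card_eq_one.mp (hX1 i)
  have huX : u ∈ X := (Finset.mem_inter.mp (hu ▸ Finset.mem_singleton_self u)).1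
  have huV : u ∈ V i := (Finset.mem_inter.mp (hu ▸ Finset.mem_singleton_self u)).2
  rw [Finset.mem_sdiff,
    mem_proj_of V X (X \ S) Finset.sdiff_subset i (hX1 i) u huX huV,
    mem_proj_of V X S hS i (hX1 i) u huX huV, Finset.mem_sdiff]
  simp [huX]

/-- Let `d ≥ p ≥ 2`, `k > p`, `s ≥ k·d + 1`, `a⃗` positive with
`Σ a_i = k`. Let `H ⊆ binom([n],k)` contain no `(a⃗,d)`-Δ-system, and let `H*` be an
`s`-homogeneous subgraph of `H` with pattern `J`, where `r(J) = k-1` and `J` has exactly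
`k-1` sets of size `k-1`. If `v ∈ E ∈ H*` is the vertex contained in all
`(k-1)`-element sets of `I(E,H*)`, then `v ∈ F` for every `F ∈ H` with
`|F ∩ E| ≥ k - a_1`. -/
theorem stmt17 (n p k d s : ℕ) (hp : 2 ≤ p) (hpd : p ≤ d) (hpk : p < k)
    (hs : k * d + 1 ≤ s)
    (a : Fin p → ℕ) (ha : ∀ i, 0 < a i) (hsum : ∑ i, a i = k)
    (H Hstar : Finset (Finset ℕ)) (J : Finset (Finset (Fin k)))
    (hH : H ⊆ Finset.powersetCard k (Finset.Icc 1 n))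
    (hfree : ¬ ContainsADSystem p a d H)
    (hsub : Hstar ⊆ H)
    (hhom : IsHomogeneousWith n k s Hstar J)
    (hrank : patternRank J = k - 1)
    (hJ : (J.filter (fun A => A.card = k - 1)).card = k - 1)
    (E : Finset ℕ) (hE : E ∈ Hstar) (v : ℕ) (hv : v ∈ E)
    (hvall : ∀ C ∈ interStruct Hstar E, C.card = k - 1 → v ∈ C)
    (F : Finset ℕ) (hF : F ∈ H) (hFE : k - a ⟨0, by omega⟩ ≤ (F ∩ E).card) :
    v ∈ F := by
  classical
  by_contra hvF
  obtain ⟨V, hVd, hVs, hV1, hunivJ, hIJ, hJcap, hsun⟩ := hhom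
  have hmemH : ∀ X ∈ H, X ⊆ Finset.Icc 1 n ∧ X.card = k := fun X hX =>
    Finset.mem_powersetCard.mp (hH hX)
  have hstar : ∀ X ∈ Hstar, X ⊆ Finset.Icc 1 n ∧ X.card = k := fun X hX => hmemH X (hsub hX)
  have hXc : ∀ X ∈ Hstar, ∀ u ∈ X, ∃ i, u ∈ V i := by
    intro X hX u hu
    have hu2 : u ∈ Finset.univ.sup V := hVs ▸ (hstar X hX).1 hu
    obtain ⟨i, _, hi⟩ := Finset.mem_sup.mp hu2
    exact ⟨i, hi⟩
  obtain ⟨c_v, hcv⟩ := hXc E hE v hv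
  have hIsub : ∀ X ∈ Hstar, ∀ C ∈ interStruct Hstar X, C ⊆ X := by
    intro X _ C hC
    obtain ⟨E2, _, rfl⟩ := Finset.mem_image.mp hC
    exact Finset.inter_subset_left
  have hkpos : 0 < k := by omega
  have hnotv : (Finset.univ : Finset (Fin k)).erase c_v ∉ J := by
    intro hmem
    rw [← hIJ E hE] at hmem
    obtain ⟨C, hCmem, hCp⟩ := Finset.mem_image.mp hmem
    have hCsub : C ⊆ E := hIsub E hE C hCmem
    have hCcard : C.card = k - 1 := by
      have h1 := proj_card V hVd E (hV1 E hE) (hXc E hE) C hCsub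
      rw [hCp, Finset.card_erase_of_mem (Finset.mem_univ c_v), Finset.card_univ,
        Fintype.card_fin] at h1
      omega
    have hvC := hvall C hCmem hCcard
    have hcvC : c_v ∈ proj V C :=
      (mem_proj_of V E C hCsub c_v (hV1 E hE c_v) v hv hcv).mpr hvC
    rw [hCp] at hcvC
    exact (Finset.mem_erase.mp hcvC).1 rfl
  have hcA : ∀ c : Fin k, c ≠ c_v → (Finset.univ : Finset (Fin k)).erase c ∈ J := by
    have hKT : J.filter (fun A => A.card = k - 1) ⊆
        (Finset.univ.erase c_v).image (fun c => (Finset.univ : Finset (Fin k)).erase c) := by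
      intro A hA
      obtain ⟨hAJ, hAc⟩ := Finset.mem_filter.mp hA
      have h1 : ((Finset.univ : Finset (Fin k)) \ A).card = 1 := by
        rw [Finset.card_sdiff_of_subset (Finset.subset_univ A), Finset.card_univ, Fintype.card_fin, hAc]
        omega
      obtain ⟨c, hc⟩ := Finset.card_eq_one.mp h1
      have hAe : A = Finset.univ.erase c := by
        rw [Finset.erase_eq, ← hc, Finset.sdiff_sdiff_self_left, Finset.univ_inter]
      have hcne : c ≠ c_v := by
        rintro rfl
        rw [hAe] at hAJ
        exact hnotv hAJ
      exact Finset.mem_image.mpr ⟨c, Finset.mem_erase.mpr ⟨hcne, Finset.mem_univ c⟩, hAe.symm⟩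
    have hTcard : ((Finset.univ.erase c_v).image
        (fun c => (Finset.univ : Finset (Fin k)).erase c)).card = k - 1 := by
      rw [Finset.card_image_of_injOn, Finset.card_erase_of_mem (Finset.mem_univ c_v),
        Finset.card_univ, Fintype.card_fin]
      intro x _ y _ hxy
      by_contra hne
      have hxy' : (Finset.univ : Finset (Fin k)).erase x = Finset.univ.erase y := hxy
      have hx : x ∈ (Finset.univ : Finset (Fin k)).erase y :=
        Finset.mem_erase.mpr ⟨hne, Finset.mem_univ x⟩
      rw [← hxy'] at hx
      exact (Finset.mem_erase.mp hx).1 rfl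
    have hKeq := Finset.eq_of_subset_of_card_le hKT (by rw [hTcard, hJ])
    intro c hc
    have hm : (Finset.univ : Finset (Fin k)).erase c ∈
        (Finset.univ.erase c_v).image (fun c => (Finset.univ : Finset (Fin k)).erase c) :=
      Finset.mem_image.mpr ⟨c, Finset.mem_erase.mpr ⟨hc, Finset.mem_univ c⟩, rfl⟩
    rw [← hKeq] at hm
    exact (Finset.mem_filter.mp hm).1
  have hcB : ∀ S : Finset (Fin k), c_v ∉ S → S.Nonempty → Finset.univ \ S ∈ J := by
    intro S
    induction S using Finset.induction_on with
    | empty => exact fun _ h => absurd rfl h.ne_empty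
    | @insert c S hcS ih =>
      intro hcv' _
      have hc : c ≠ c_v := by
        rintro rfl
        exact hcv' (Finset.mem_insert_self _ _)
      have hcvS : c_v ∉ S := fun h => hcv' (Finset.mem_insert_of_mem h)
      rcases S.eq_empty_or_nonempty with rfl | hSne
      · have : Finset.univ \ insert c ∅ = (Finset.univ : Finset (Fin k)).erase c := by
          simp [Finset.erase_eq]
        rw [this]
        exact hcA c hc
      · have hsplit : Finset.univ \ insert c S =
            ((Finset.univ : Finset (Fin k)).erase c) ∩ (Finset.univ \ S) := by
          ext x
          simp only [Finset.mem_sdiff, Finset.mem_insert, Finset.mem_inter, Finset.mem_erase,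
            Finset.mem_univ, true_and]
          tauto
        rw [hsplit]
        exact hJcap _ (hcA c hc) _ (ih hcvS hSne)
  have claimC : ∀ X ∈ Hstar, v ∈ X → ∀ S : Finset ℕ, S ⊆ X → S.Nonempty → v ∉ S →
      ∃ D : Finset (Finset ℕ), D ⊆ Hstar ∧ X ∈ D ∧ D.card = s ∧ IsDeltaSystem D (X \ S) := by
    intro X hX hvX S hSX hSne hvS
    have hX1 := hV1 X hX
    have hXcX := hXc X hX
    have hcvS : c_v ∉ proj V S := by
      rw [mem_proj_of V X S hSX c_v (hX1 c_v) v hvX hcv]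
      exact hvS
    have hSproj : (proj V S).Nonempty := by
      rw [← Finset.card_pos, proj_card V hVd X hX1 hXcX S hSX, Finset.card_pos]
      exact hSne
    have hJm : Finset.univ \ proj V S ∈ J := hcB _ hcvS hSproj
    rw [← hIJ X hX] at hJm
    obtain ⟨C, hCmem, hCp⟩ := Finset.mem_image.mp hJm
    have hCX : C ⊆ X := hIsub X hX C hCmem
    have hCeq : C = X \ S := by
      apply proj_inj V X hX1 hXcX C (X \ S) hCX Finset.sdiff_subset
      rw [hCp, proj_sdiff V X S hSX hX1]
    obtain ⟨D, hD1, hD2, hD3, hD4⟩ := hsun X hX C hCmem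
    rw [hCeq] at hD4
    exact ⟨D, hD1, hD2, hD3, hD4⟩
  -- abbreviations
  have hp0 : 0 < p := by omega
  have hEcard : E.card = k := (hstar E hE).2
  have hFk : F.card = k := (hmemH F hF).2
  have hFE2 : k - a ⟨0, hp0⟩ ≤ (F ∩ E).card := hFE
  have ha1pos : 0 < a ⟨0, hp0⟩ := ha _
  have ha1k : a ⟨0, hp0⟩ ≤ k := by
    rw [← hsum]
    exact Finset.single_le_sum (fun i _ => Nat.zero_le (a i)) (Finset.mem_univ _)
  have hkd2 : k * 2 ≤ k * d := Nat.mul_le_mul_left k (by omega)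
  -- construct E'
  obtain ⟨E', hE'star, hvE', hE'F⟩ :
      ∃ E', E' ∈ Hstar ∧ v ∈ E' ∧ (E' ∩ F).card = k - a ⟨0, hp0⟩ := by
    rcases eq_or_lt_of_le hFE2 with heq | hlt
    · exact ⟨E, hE, hv, by rw [Finset.inter_comm]; omega⟩
    · obtain ⟨S0, hS0sub, hS0card⟩ := Finset.exists_subset_card_eq (s := F ∩ E)
        (n := (F ∩ E).card - (k - a ⟨0, hp0⟩)) (Nat.sub_le _ _)
      have hS0E : S0 ⊆ E := hS0sub.trans Finset.inter_subset_right
      have hS0ne : S0.Nonempty := by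
        rw [← Finset.card_pos, hS0card]
        omega
      have hvS0 : v ∉ S0 := fun h => hvF (Finset.mem_inter.mp (hS0sub h)).1
      obtain ⟨D, hD1, hD2, hD3, hD4⟩ := claimC E hE hv S0 hS0E hS0ne hvS0
      obtain ⟨Pn, hPns, hPnc, hPnd⟩ := delta_select D (E \ S0) E hD4 hD2
        Finset.sdiff_subset F 1 (by rw [hD3, hFk]; omega)
      obtain ⟨F', hF'⟩ := Finset.card_eq_one.mp hPnc
      have hF'mem : F' ∈ D.erase E := hPns (hF' ▸ Finset.mem_singleton_self F')
      have hF'D : F' ∈ D := Finset.mem_of_mem_erase hF'mem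
      have hF'ne : F' ≠ E := (Finset.mem_erase.mp hF'mem).1
      have hdisj : Disjoint (F' \ E) F := hPnd F' (hF' ▸ Finset.mem_singleton_self F')
      have hEF' : E ∩ F' = E \ S0 := hD4.2 E hD2 F' hF'D (fun h => hF'ne h.symm)
      have hvF' : v ∈ F' := by
        have hvm : v ∈ E ∩ F' := hEF' ▸ Finset.mem_sdiff.mpr ⟨hv, hvS0⟩
        exact (Finset.mem_inter.mp hvm).2
      have hF'F : F' ∩ F = (F ∩ E) \ S0 := by
        ext w
        simp only [Finset.mem_inter, Finset.mem_sdiff]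
        constructor
        · rintro ⟨hwF', hwF⟩
          by_cases hwE : w ∈ E
          · have hwm : w ∈ E ∩ F' := Finset.mem_inter.mpr ⟨hwE, hwF'⟩
            rw [hEF'] at hwm
            exact ⟨⟨hwF, hwE⟩, (Finset.mem_sdiff.mp hwm).2⟩
          · exact absurd hwF (Finset.disjoint_left.mp hdisj (Finset.mem_sdiff.mpr ⟨hwF', hwE⟩))
        · rintro ⟨⟨hwF, hwE⟩, hwS0⟩
          have hwm : w ∈ E ∩ F' := by
            rw [hEF']
            exact Finset.mem_sdiff.mpr ⟨hwE, hwS0⟩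
          exact ⟨(Finset.mem_inter.mp hwm).2, hwF⟩
      refine ⟨F', hD1 hF'D, hvF', ?_⟩
      rw [hF'F, Finset.card_sdiff_of_subset hS0sub, hS0card]
      omega
  have hE'card : E'.card = k := (hstar E' hE'star).2
  have hE'IF : (E' \ F).card = a ⟨0, hp0⟩ := by
    have h0 := Finset.card_sdiff_add_card_inter E' F
    omega
  set i0 : Fin p := ⟨0, hp0⟩ with hi0def
  have hsum' : (E' ∩ F).card = ∑ i ∈ Finset.univ.erase i0, a i := by
    have h0 := Finset.add_sum_erase Finset.univ a (Finset.mem_univ i0)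
    rw [hsum] at h0
    omega
  obtain ⟨A', hA'1, hA'2, hA'3, hA'4⟩ := exists_partition a (Finset.univ.erase i0)
    (E' ∩ F) hsum'
  set A : Fin p → Finset ℕ := fun i => if i = i0 then E' \ F else A' i with hAdef
  have hAi0 : A i0 = E' \ F := if_pos rfl
  have hAne : ∀ i : Fin p, i ≠ i0 → A i = A' i := fun i hi => if_neg hi
  have hAcard : ∀ i, (A i).card = a i := by
    intro i
    by_cases h : i = i0
    · subst h
      rw [hAi0, hE'IF]
    · rw [hAne i h]
      exact hA'1 i (Finset.mem_erase.mpr ⟨h, Finset.mem_univ i⟩)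
  have hAsubF : ∀ i : Fin p, i ≠ i0 → A i ⊆ E' ∩ F := fun i hi =>
    (hAne i hi) ▸ hA'2 i (Finset.mem_erase.mpr ⟨hi, Finset.mem_univ i⟩)
  have hAdisj : ∀ i j : Fin p, i ≠ j → Disjoint (A i) (A j) := by
    intro i j hij
    by_cases hi : i = i0
    · subst hi
      rw [hAi0, hAne j (Ne.symm hij)]
      exact Finset.sdiff_disjoint.mono_right
        ((hA'2 j (Finset.mem_erase.mpr ⟨Ne.symm hij, Finset.mem_univ j⟩)).trans
          Finset.inter_subset_right)
    · by_cases hj : j = i0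
      · subst hj
        rw [hAi0, hAne i hi]
        exact (Finset.sdiff_disjoint.mono_right
          ((hA'2 i (Finset.mem_erase.mpr ⟨hi, Finset.mem_univ i⟩)).trans
            Finset.inter_subset_right)).symm
      · rw [hAne i hi, hAne j hj]
        exact hA'3 i (Finset.mem_erase.mpr ⟨hi, Finset.mem_univ i⟩) j
          (Finset.mem_erase.mpr ⟨hj, Finset.mem_univ j⟩) hij
  have hApart : IsAPartition p a A E' := by
    refine ⟨hAcard, hAdisj, ?_⟩
    have huniv : (Finset.univ : Finset (Fin p)) = insert i0 (Finset.univ.erase i0) :=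
      (Finset.insert_erase (Finset.mem_univ i0)).symm
    rw [huniv, Finset.sup_insert]
    have h2 : (Finset.univ.erase i0).sup A = (Finset.univ.erase i0).sup A' :=
      Finset.sup_congr rfl (fun j hj => hAne j (Finset.mem_erase.mp hj).1)
    rw [hAi0, h2, hA'4]
    exact Finset.sdiff_union_inter E' F
  have hAprops : ∀ i : Fin p, i ≠ i0 → (A i ⊆ E' ∧ (A i).Nonempty ∧ v ∉ A i) := by
    intro i hi
    have h1 := hAsubF i hi
    refine ⟨h1.trans Finset.inter_subset_left, ?_, fun h => hvF (Finset.mem_inter.mp (h1 h)).2⟩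
    rw [← Finset.card_pos, hAcard]
    exact ha i
  have hDex : ∀ i : Fin p, ∃ D : Finset (Finset ℕ), i ≠ i0 →
      D ⊆ Hstar ∧ E' ∈ D ∧ D.card = s ∧ IsDeltaSystem D (E' \ A i) := by
    intro i
    by_cases h : i = i0
    · exact ⟨∅, fun h' => absurd h h'⟩
    · obtain ⟨h1, h2, h3⟩ := hAprops i h
      obtain ⟨D, hD⟩ := claimC E' hE'star hvE' (A i) h1 h2 h3
      exact ⟨D, fun _ => hD⟩
  choose Dfun hDfun using hDex
  have hi1lt : 1 < p := by omega
  set i1 : Fin p := ⟨1, hi1lt⟩ with hi1def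
  have hi01 : i0 ≠ i1 := by
    intro h
    have h2 := congrArg Fin.val h
    simp [hi0def, hi1def] at h2
  set b : Fin p → ℕ := fun i => 1 + (if i = i1 then d - p else 0) with hbdef
  have hbpos : ∀ i, 0 < b i := fun i => Nat.lt_of_lt_of_le Nat.one_pos (Nat.le_add_right 1 _)
  have hbsum : ∑ i, b i = d := by
    simp only [hbdef]
    rw [Finset.sum_add_distrib, Finset.sum_const, Finset.card_univ, Fintype.card_fin,
      smul_eq_mul, mul_one, Finset.sum_ite_eq' Finset.univ i1 (fun _ => d - p)]
    simp only [Finset.mem_univ, if_pos]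
    omega
  have hb0 : b i0 = 1 := by
    simp only [hbdef]
    rw [if_neg hi01]
  -- selection of petals
  have hsel : ∀ t : ℕ, t ≤ p → ∃ P : Fin p → Finset (Finset ℕ),
      (∀ i : Fin p, i ≠ i0 → (i : ℕ) < t →
        P i ⊆ (Dfun i).erase E' ∧ (P i).card = b i ∧ ∀ X ∈ P i, Disjoint (X \ E') (F \ E')) ∧
      (∀ i j : Fin p, i ≠ i0 → j ≠ i0 → (i : ℕ) < t → (j : ℕ) < t → i ≠ j →
        ∀ X ∈ P i, ∀ Y ∈ P j, Disjoint (X \ E') (Y \ E')) := by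
    intro t
    induction t with
    | zero =>
      exact fun _ => ⟨fun _ => ∅, fun i _ hi => absurd hi (by omega),
        fun i j _ _ hi => absurd hi (by omega)⟩
    | succ t ih =>
      intro ht
      obtain ⟨P, hP1, hP2⟩ := ih (by omega)
      have htp : t < p := by omega
      set it : Fin p := ⟨t, htp⟩ with hitdef
      have hval : ∀ i : Fin p, (i : ℕ) < t + 1 → i ≠ it → (i : ℕ) < t := by
        intro i h1 h2
        have h3 : (i : ℕ) ≠ t := fun hh => h2 (Fin.ext hh)
        omega
      by_cases hti : it = i0
      · refine ⟨P, ?_, ?_⟩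
        · intro i hi hlt
          exact hP1 i hi (hval i hlt (fun h => hi (h.trans hti)))
        · intro i j hi hj hit hjt hij
          exact hP2 i j hi hj (hval i hit (fun h => hi (h.trans hti)))
            (hval j hjt (fun h => hj (h.trans hti))) hij
      · set filt := Finset.univ.filter (fun i : Fin p => i ≠ i0 ∧ (i : ℕ) < t) with hfiltdef
        set W := (F \ E') ∪ filt.biUnion (fun i => (P i).biUnion (fun X => X \ E')) with hWdef
        obtain ⟨hDsub, hDmem, hDcard, hDdelta⟩ := hDfun it hti
        have hWb : W.card ≤ k + (∑ i ∈ filt, b i) * k := by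
          calc W.card ≤ (F \ E').card +
              (filt.biUnion fun i => (P i).biUnion fun X => X \ E').card :=
              Finset.card_union_le _ _
          _ ≤ k + ∑ i ∈ filt, ((P i).biUnion fun X => X \ E').card := by
              refine Nat.add_le_add ?_ Finset.card_biUnion_le
              exact le_trans (Finset.card_le_card Finset.sdiff_subset) (le_of_eq hFk)
          _ ≤ k + ∑ i ∈ filt, b i * k := by
              refine Nat.add_le_add_left (Finset.sum_le_sum ?_) k
              intro i hifilt
              obtain ⟨hif1, hif2⟩ := (Finset.mem_filter.mp hifilt).2
              obtain ⟨hPi1, hPi2, _⟩ := hP1 i hif1 hif2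
              calc ((P i).biUnion fun X => X \ E').card
                  ≤ ∑ X ∈ P i, (X \ E').card := Finset.card_biUnion_le
                _ ≤ ∑ _X ∈ P i, k := by
                    refine Finset.sum_le_sum ?_
                    intro X hX
                    have hXH : X ∈ Hstar := (hDfun i hif1).1
                      (Finset.mem_of_mem_erase (hPi1 hX))
                    exact le_trans (Finset.card_le_card Finset.sdiff_subset)
                      (le_of_eq (hstar X hXH).2)
                _ = (P i).card * k := by rw [Finset.sum_const, smul_eq_mul]
                _ = b i * k := by rw [hPi2]
          _ = k + (∑ i ∈ filt, b i) * k := by rw [Finset.sum_mul]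
        have hsumfilt : ∑ i ∈ filt, b i + b it + 1 ≤ d := by
          have hi0f : i0 ∉ insert it filt := by
            simp only [Finset.mem_insert, hfiltdef, Finset.mem_filter, Finset.mem_univ, true_and]
            push_neg
            exact ⟨fun h => hti h.symm, fun h => absurd rfl h⟩
          have hitf : it ∉ filt := by
            simp only [hfiltdef, Finset.mem_filter, Finset.mem_univ, true_and, hitdef]
            push_neg
            intro _
            omega
          have hle : ∑ i ∈ insert i0 (insert it filt), b i ≤ ∑ i, b i :=
            Finset.sum_le_sum_of_subset (Finset.subset_univ _)
          rw [Finset.sum_insert hi0f, Finset.sum_insert hitf, hbsum, hb0] at hle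
          omega
        have hm : W.card + b it + 1 ≤ s := by
          have h1 : 1 + (∑ i ∈ filt, b i) + b it ≤ d := by omega
          have h2 : k * (1 + (∑ i ∈ filt, b i) + b it) ≤ k * d := Nat.mul_le_mul_left k h1
          have h3 : b it ≤ k * b it := Nat.le_mul_of_pos_left _ hkpos
          have h4 : k * (1 + (∑ i ∈ filt, b i) + b it) =
              k + k * (∑ i ∈ filt, b i) + k * b it := by ring
          have h5 : (∑ i ∈ filt, b i) * k = k * (∑ i ∈ filt, b i) := Nat.mul_comm _ _
          omega
        obtain ⟨Pn, hPn1, hPn2, hPn3⟩ := delta_select (Dfun it) (E' \ A it) E' hDdelta hDmem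
          Finset.sdiff_subset W (b it) (by rw [hDcard]; exact hm)
        refine ⟨fun i => if i = it then Pn else P i, ?_, ?_⟩
        · intro i hi hlt
          by_cases h : i = it
          · subst h
            simp only [if_pos rfl]
            exact ⟨hPn1, hPn2, fun X hX => (hPn3 X hX).mono_right
              (by rw [hWdef]; exact Finset.subset_union_left)⟩
          · simp only [if_neg h]
            exact hP1 i hi (hval i hlt h)
        · intro i j hi hj hit' hjt' hij X hX Y hY
          by_cases h1 : i = it <;> by_cases h2 : j = it
          · exact absurd (h1.trans h2.symm) hij
          · subst h1
            simp only [if_pos rfl] at hX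
            simp only [if_neg h2] at hY
            have hjtlt := hval j hjt' h2
            have hYW : Y \ E' ⊆ W := by
              have hsub2 : Y \ E' ⊆ filt.biUnion (fun i => (P i).biUnion fun X => X \ E') := by
                intro w hw
                refine Finset.mem_biUnion.mpr ⟨j, ?_, Finset.mem_biUnion.mpr ⟨Y, hY, hw⟩⟩
                rw [hfiltdef]
                exact Finset.mem_filter.mpr ⟨Finset.mem_univ j, hj, hjtlt⟩
              rw [hWdef]
              exact hsub2.trans Finset.subset_union_right
            exact (hPn3 X hX).mono_right hYW
          · subst h2
            simp only [if_pos rfl] at hY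
            simp only [if_neg h1] at hX
            have hitlt := hval i hit' h1
            have hXW : X \ E' ⊆ W := by
              have hsub2 : X \ E' ⊆ filt.biUnion (fun i => (P i).biUnion fun X => X \ E') := by
                intro w hw
                refine Finset.mem_biUnion.mpr ⟨i, ?_, Finset.mem_biUnion.mpr ⟨X, hX, hw⟩⟩
                rw [hfiltdef]
                exact Finset.mem_filter.mpr ⟨Finset.mem_univ i, hi, hitlt⟩
              rw [hWdef]
              exact hsub2.trans Finset.subset_union_right
            exact ((hPn3 Y hY).mono_right hXW).symm
          · simp only [if_neg h1] at hX
            simp only [if_neg h2] at hY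
            exact hP2 i j hi hj (hval i hit' h1) (hval j hjt' h2) hij X hX Y hY
  obtain ⟨P, hPall, hPcross⟩ := hsel p (le_refl p)
  have hgex : ∀ i : Fin p, ∃ g : Fin (b i) → Finset ℕ, i ≠ i0 →
      (Function.Injective g ∧ ∀ j, g j ∈ P i) := by
    intro i
    by_cases h : i = i0
    · exact ⟨fun _ => F, fun h' => absurd h h'⟩
    · obtain ⟨hPs, hPc, _⟩ := hPall i h i.isLt
      refine ⟨fun j => ((P i).equivFin.symm (Fin.cast hPc.symm j) : Finset ℕ),
        fun _ => ⟨?_, ?_⟩⟩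
      · intro x y hxy
        have h1 : (P i).equivFin.symm (Fin.cast hPc.symm x) =
            (P i).equivFin.symm (Fin.cast hPc.symm y) := Subtype.ext hxy
        have h2 := (P i).equivFin.symm.injective h1
        have h3 := congrArg Fin.val h2
        simp only [Fin.coe_cast] at h3
        exact Fin.ext h3
      · intro j
        exact Finset.coe_mem _
  choose g hg using hgex
  have hgmem : ∀ (i : Fin p), i ≠ i0 → ∀ j, g i j ∈ (Dfun i).erase E' := by
    intro i hi j
    exact (hPall i hi i.isLt).1 ((hg i hi).2 j)
  refine hfree ⟨b, hbpos, hbsum, E', hsub hE'star,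
    (fun i j => if i = i0 then F else g i j), ?_, ?_, ?_⟩
  · intro i j
    by_cases h : i = i0
    · simp only [if_pos h]
      exact hF
    · simp only [if_neg h]
      exact hsub ((hDfun i h).1 (Finset.mem_of_mem_erase (hgmem i h j)))
  · -- semi system
    refine ⟨A, hApart, ?_⟩
    intro i
    by_cases h : i = i0
    · subst h
      have hAF : E' \ A i0 = E' ∩ F := by
        rw [hAi0, Finset.sdiff_sdiff_self_left]
      refine ⟨?_, ?_, ?_, ?_⟩
      · intro j
        show F ≠ E'
        intro hFE'
        exact hvF (hFE' ▸ hvE')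
      · intro x y _
        have hx := x.isLt
        have hy := y.isLt
        exact Fin.ext (by omega)
      · intro j
        show E' ∩ F = E' \ A i0
        rw [hAF]
      · intro j j' hjj'
        exfalso
        apply hjj'
        have hx := j.isLt
        have hy := j'.isLt
        exact Fin.ext (by omega)
    · obtain ⟨hDsub, hDmem, hDcard, hDdelta⟩ := hDfun i h
      refine ⟨?_, ?_, ?_, ?_⟩
      · intro j
        simp only [if_neg h]
        exact (Finset.mem_erase.mp (hgmem i h j)).1
      · simp only [if_neg h]
        exact (hg i h).1
      · intro j
        simp only [if_neg h]
        exact hDdelta.2 E' hDmem (g i j) (Finset.mem_of_mem_erase (hgmem i h j))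
          (Ne.symm (Finset.mem_erase.mp (hgmem i h j)).1)
      · intro j j' hjj'
        simp only [if_neg h]
        exact hDdelta.2 (g i j) (Finset.mem_of_mem_erase (hgmem i h j)) (g i j')
          (Finset.mem_of_mem_erase (hgmem i h j'))
          (fun hh => hjj' ((hg i h).1 hh))
  · -- disjointness
    rintro ⟨i, jx⟩ ⟨i', jy⟩ hxy
    simp only
    by_cases hii' : i = i'
    · subst hii'
      have hjj : jx ≠ jy := by
        rintro rfl
        exact hxy rfl
      by_cases h : i = i0
      · subst h
        exfalso
        apply hjj
        have hx := jx.isLt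
        have hy := jy.isLt
        exact Fin.ext (by omega)
      · simp only [if_neg h]
        obtain ⟨hDsub, hDmem, hDcard, hDdelta⟩ := hDfun i h
        have hne : g i jx ≠ g i jy := fun hh => hjj ((hg i h).1 hh)
        have hXY := hDdelta.2 (g i jx) (Finset.mem_of_mem_erase (hgmem i h jx))
          (g i jy) (Finset.mem_of_mem_erase (hgmem i h jy)) hne
        rw [Finset.disjoint_left]
        intro w hw1 hw2
        have hwm : w ∈ g i jx ∩ g i jy := Finset.mem_inter.mpr
          ⟨(Finset.mem_sdiff.mp hw1).1, (Finset.mem_sdiff.mp hw2).1⟩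
        rw [hXY] at hwm
        exact (Finset.mem_sdiff.mp hw1).2 (Finset.mem_sdiff.mp hwm).1
    · by_cases h1 : i = i0
      · subst h1
        have hi' : i' ≠ i0 := fun hh => hii' hh.symm
        simp only [if_neg hi']
        show Disjoint (F \ E') (g i' jy \ E')
        exact (((hPall i' hi' i'.isLt).2.2) (g i' jy) ((hg i' hi').2 jy)).symm
      · by_cases h2 : i' = i0
        · subst h2
          simp only [if_neg h1]
          show Disjoint (g i jx \ E') (F \ E')
          exact ((hPall i h1 i.isLt).2.2) (g i jx) ((hg i h1).2 jx)
        · simp only [if_neg h1, if_neg h2]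
          exact hPcross i i' h1 h2 i.isLt i'.isLt hii' _ ((hg i h1).2 jx) _ ((hg i' h2).2 jy)
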